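/- arXiv:1701.02134 — 2 statements merged into one kernel-verified Lean document; each statement's English description precedes it below -/
import Mathlib

section
/- Let U ⊆ ℂ be open and y : U → ℂ holomorphic with y′(z) ≠ 0 for all z ∈ U. Define x : U → ℝ³ by x = (2 Re y, 2 Im y, 1 − |y|²)/(1 + |y|²) (inverse stereographic projection onto the unit sphere), and write x_z := ½(x_u − i x_v), x_z̄ := ½(x_u + i x_v) ∈ ℂ³. Then, with B_ℂ the complex-bilinear extension of the Euclidean inner product, B_ℂ(x_z, x_z̄) ≠ 0 and (1/(2y′)) · (1 − y², i(1 + y²), −2y) = x_z̄ / B_ℂ(x_z, x_z̄) at every point of U; i.e. the Enneper–Weierstrass integrand is exactly the Christoffel dual differential of the Gauss map. (Paper: Section 3, equation (weierdiff) specialized to 𝔮 = dz².) -/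
set_option maxHeartbeats 1000000

/-- Componentwise inclusion `ℝ³ ↪ ℂ³`. -/
noncomputable def toC (x : ℝ × ℝ × ℝ) : ℂ × ℂ × ℂ := ((x.1 : ℂ), (x.2.1 : ℂ), (x.2.2 : ℂ))

/-- Partial derivatives of a map `x : ℂ → ℝ³` with respect to the real coordinates
`z = u + iv`. -/
noncomputable def pdu (x : ℂ → ℝ × ℝ × ℝ) (p : ℂ) : ℝ × ℝ × ℝ := fderiv ℝ x p 1
noncomputable def pdv (x : ℂ → ℝ × ℝ × ℝ) (p : ℂ) : ℝ × ℝ × ℝ := fderiv ℝ x p Complex.I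

/-- `x_z := ½ (x_u − i x_v)` in `ℂ³`. -/
noncomputable def pdz (x : ℂ → ℝ × ℝ × ℝ) (p : ℂ) : ℂ × ℂ × ℂ :=
  (1 / 2 : ℂ) • (toC (pdu x p) - Complex.I • toC (pdv x p))

/-- `x_z̄ := ½ (x_u + i x_v)` in `ℂ³`. -/
noncomputable def pdzbar (x : ℂ → ℝ × ℝ × ℝ) (p : ℂ) : ℂ × ℂ × ℂ :=
  (1 / 2 : ℂ) • (toC (pdu x p) + Complex.I • toC (pdv x p))

/-- The complex-bilinear extension of the Euclidean inner product of `ℝ³` to `ℂ³`. -/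
def BEc (ξ η : ℂ × ℂ × ℂ) : ℂ := ξ.1 * η.1 + ξ.2.1 * η.2.1 + ξ.2.2 * η.2.2

/-- **Section 3, (weierdiff) with 𝔮 = dz².** For the inverse stereographic projection `x` of
a holomorphic `y` with nonvanishing derivative, the Enneper–Weierstrass integrand is exactly
the Christoffel dual differential: `(1/(2y′))(1−y², i(1+y²), −2y) = x_z̄ / B_ℂ(x_z, x_z̄)`. -/
theorem weierstrass_is_christoffel
    (U : Set ℂ) (hUopen : IsOpen U)
    (y : ℂ → ℂ) (hy : DifferentiableOn ℂ y U) (hy' : ∀ z ∈ U, deriv y z ≠ 0)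
    (x : ℂ → ℝ × ℝ × ℝ)
    (hx : ∀ z, x z =
      (2 * (y z).re / (1 + Complex.normSq (y z)),
       2 * (y z).im / (1 + Complex.normSq (y z)),
       (1 - Complex.normSq (y z)) / (1 + Complex.normSq (y z)))) :
    ∀ p ∈ U,
      BEc (pdz x p) (pdzbar x p) ≠ 0 ∧
      (2 * deriv y p)⁻¹ •
          ((1 - y p ^ 2, Complex.I * (1 + y p ^ 2), -2 * y p) : ℂ × ℂ × ℂ) =
        (BEc (pdz x p) (pdzbar x p))⁻¹ • pdzbar x p := by
  intro p hp
  have hya : DifferentiableAt ℂ y p := hy.differentiableAt (hUopen.mem_nhds hp)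
  have hyd : HasDerivAt y (deriv y p) p := hya.hasDerivAt
  have hCne : deriv y p ≠ 0 := hy' p hp
  have hC : HasFDerivAt y (((1 : ℂ →L[ℂ] ℂ).smulRight (deriv y p)).restrictScalars ℝ) p :=
    hyd.hasFDerivAt.restrictScalars ℝ
  have hr : HasFDerivAt (fun z => (y z).re)
      (Complex.reCLM.comp (((1 : ℂ →L[ℂ] ℂ).smulRight (deriv y p)).restrictScalars ℝ)) p :=
    (Complex.reCLM.hasFDerivAt).comp p hC
  have hs : HasFDerivAt (fun z => (y z).im)
      (Complex.imCLM.comp (((1 : ℂ →L[ℂ] ℂ).smulRight (deriv y p)).restrictScalars ℝ)) p :=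
    (Complex.imCLM.hasFDerivAt).comp p hC
  have hDpos : (0:ℝ) < 1 + ((y p).re * (y p).re + (y p).im * (y p).im) := by
    nlinarith [mul_self_nonneg (y p).re, mul_self_nonneg (y p).im]
  have hD0 : (1 + ((y p).re * (y p).re + (y p).im * (y p).im)) ≠ 0 := hDpos.ne'
  have hden := ((hr.mul hr).add (hs.mul hs)).const_add 1
  have hinv := (hasFDerivAt_inv hD0).comp p hden
  have h1 := (hr.const_mul (2:ℝ)).mul hinv
  have h2 := (hs.const_mul (2:ℝ)).mul hinv
  have h3 := (((hr.mul hr).add (hs.mul hs)).const_sub 1).mul hinv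
  have hxeq : x = fun z =>
      ((2 * (y z).re * (1 + ((y z).re * (y z).re + (y z).im * (y z).im))⁻¹),
       (2 * (y z).im * (1 + ((y z).re * (y z).re + (y z).im * (y z).im))⁻¹),
       ((1 - ((y z).re * (y z).re + (y z).im * (y z).im)) *
         (1 + ((y z).re * (y z).re + (y z).im * (y z).im))⁻¹)) := by
    funext z; rw [hx z]; simp [Complex.normSq_apply, div_eq_mul_inv]
  have hfd : HasFDerivAt x _ p := hxeq ▸ (h1.prodMk (h2.prodMk h3))
  clear hden hinv h1 h2 h3 hxeq hC hr hs hyd hya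
  -- abbreviations
  set u := (y p).re with hu
  set v := (y p).im with hv
  set c1 := (deriv y p).re with hc1
  set c2 := (deriv y p).im with hc2
  set d := 1 + (u*u + v*v) with hd
  have hd0 : d ≠ 0 := hD0
  have hpdu : pdu x p =
      ((2*(d - 2*u*u)*c1 - 4*u*v*c2)/d^2,
       (-(4*u*v*c1) + 2*(d - 2*v*v)*c2)/d^2,
       (-(4*u*c1) - 4*v*c2)/d^2) := by
    rw [show pdu x p = fderiv ℝ x p 1 from rfl, hfd.fderiv]
    simp
    refine ⟨?_, ?_, ?_⟩ <;> field_simp <;> ring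
  have hpdv : pdv x p =
      ((-(2*(d - 2*u*u)*c2) - 4*u*v*c1)/d^2,
       (4*u*v*c2 + 2*(d - 2*v*v)*c1)/d^2,
       (4*u*c2 - 4*v*c1)/d^2) := by
    rw [show pdv x p = fderiv ℝ x p Complex.I from rfl, hfd.fderiv]
    simp
    refine ⟨?_, ?_, ?_⟩ <;> field_simp <;> ring
  have hd0c : (((d^2:ℝ)):ℂ) ≠ 0 := by
    exact_mod_cast pow_ne_zero 2 hd0
  have hare : y p = (u : ℂ) + (v:ℂ) * Complex.I := (Complex.re_add_im (y p)).symm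
  have hcre : deriv y p = (c1 : ℂ) + (c2:ℂ) * Complex.I := (Complex.re_add_im (deriv y p)).symm
  have hzb : pdzbar x p =
      ((starRingEnd ℂ (deriv y p)) * (1 - (y p)^2) / ((d^2:ℝ):ℂ),
       (starRingEnd ℂ (deriv y p)) * (Complex.I*(1+(y p)^2)) / ((d^2:ℝ):ℂ),
       (starRingEnd ℂ (deriv y p)) * (-2*(y p)) / ((d^2:ℝ):ℂ)) := by
    rw [show pdzbar x p = (1 / 2 : ℂ) • (toC (pdu x p) + Complex.I • toC (pdv x p)) from rfl,
      hpdu, hpdv]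
    simp only [toC, Prod.smul_mk, Prod.mk_add_mk, Prod.mk.injEq, smul_eq_mul, hare, hcre]
    refine ⟨?_, ?_, ?_⟩ <;>
      (apply Complex.ext <;>
        simp [Complex.mul_re, Complex.mul_im, pow_two, -Complex.ofReal_pow,
          -Complex.ofReal_mul] <;>
        field_simp <;> ((try rw [hd]); ring))
  have hz : pdz x p =
      ((deriv y p) * (1 - (starRingEnd ℂ (y p))^2) / ((d^2:ℝ):ℂ),
       (deriv y p) * (-(Complex.I*(1+(starRingEnd ℂ (y p))^2))) / ((d^2:ℝ):ℂ),
       (deriv y p) * (-2*(starRingEnd ℂ (y p))) / ((d^2:ℝ):ℂ)) := by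
    rw [show pdz x p = (1 / 2 : ℂ) • (toC (pdu x p) - Complex.I • toC (pdv x p)) from rfl,
      hpdu, hpdv]
    simp only [toC, Prod.smul_mk, Prod.mk_sub_mk, Prod.mk.injEq, smul_eq_mul, hare, hcre]
    refine ⟨?_, ?_, ?_⟩ <;>
      (apply Complex.ext <;>
        simp [Complex.mul_re, Complex.mul_im, pow_two, -Complex.ofReal_pow,
          -Complex.ofReal_mul] <;>
        field_simp <;> ((try rw [hd]); ring))
  have hB : BEc (pdz x p) (pdzbar x p) =
      2 * ((deriv y p) * starRingEnd ℂ (deriv y p)) / ((d^2:ℝ):ℂ) := by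
    rw [hz, hzb, BEc]
    simp only [hare, hcre]
    apply Complex.ext <;>
      simp [Complex.mul_re, Complex.mul_im, pow_two, -Complex.ofReal_pow,
        -Complex.ofReal_mul] <;>
      field_simp <;> (rw [hd]; ring)
  have hk : starRingEnd ℂ (deriv y p) ≠ 0 := by simpa using hCne
  have hBne : BEc (pdz x p) (pdzbar x p) ≠ 0 := by
    rw [hB]
    exact div_ne_zero (by simp [hCne, hk]) hd0c
  refine ⟨hBne, ?_⟩
  rw [hB, hzb]
  obtain ⟨X, hX, hXne⟩ : ∃ X : ℂ, X = ((d^2:ℝ):ℂ) ∧ X ≠ 0 := ⟨_, rfl, hd0c⟩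
  rw [← hX]
  simp only [Prod.smul_mk, smul_eq_mul, Prod.mk.injEq]
  refine ⟨?_, ?_, ?_⟩ <;> field_simp [hCne, hk, hXne] <;> ring
end

section
/- Let U ⊆ ℂ be open and y : U → ℂ holomorphic with y′(z) ≠ 0 and |y(z)| ≠ 1 for all z ∈ U. Define x : U → ℝ³ by x = (2 Re y, 2 Im y, 1 + |y|²)/(1 − |y|²) (inverse stereographic projection onto the standard 2-sheeted hyperboloid in ℝ^{2,1}), and write x_z := ½(x_u − i x_v), x_z̄ := ½(x_u + i x_v) ∈ ℂ³. Then, with B_{M,ℂ} the complex-bilinear extension of the Minkowski bilinear form B_M(x, y) = x₁y₁ + x₂y₂ − x₃y₃, one has B_{M,ℂ}(x_z, x_z̄) ≠ 0 and (1/(2y′)) · (1 + y², i(1 − y²), 2y) = x_z̄ / B_{M,ℂ}(x_z, x_z̄) at every point of U; i.e. Kobayashi's Weierstrass integrand for maximal surfaces is exactly the Christoffel dual differential of the hyperboloid Gauss map. (Paper: Section 4, following equation (kobayashi).) -/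
set_option maxHeartbeats 2000000



/-- The complex-bilinear extension of the Minkowski bilinear form of `ℝ^{2,1}` to `ℂ³`. -/
def BMc (ξ η : ℂ × ℂ × ℂ) : ℂ := ξ.1 * η.1 + ξ.2.1 * η.2.1 - ξ.2.2 * η.2.2

open Complex

private lemma fderiv_eval (y : ℂ → ℂ) (p : ℂ) (hyd : DifferentiableAt ℂ y p)
    (hd : 1 - Complex.normSq (y p) ≠ 0)
    (x : ℂ → ℝ × ℝ × ℝ)
    (hx : ∀ z, x z =
      (2 * (y z).re / (1 - Complex.normSq (y z)),
       2 * (y z).im / (1 - Complex.normSq (y z)),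
       (1 + Complex.normSq (y z)) / (1 - Complex.normSq (y z)))) (h : ℂ) :
    fderiv ℝ x p h =
      (((2 * (h * deriv y p).re * (1 - Complex.normSq (y p))
          + 2 * (y p).re * (2 * ((y p).re * (h * deriv y p).re + (y p).im * (h * deriv y p).im)))
          / (1 - Complex.normSq (y p)) ^ 2),
       ((2 * (h * deriv y p).im * (1 - Complex.normSq (y p))
          + 2 * (y p).im * (2 * ((y p).re * (h * deriv y p).re + (y p).im * (h * deriv y p).im)))
          / (1 - Complex.normSq (y p)) ^ 2),
       (2 * (2 * ((y p).re * (h * deriv y p).re + (y p).im * (h * deriv y p).im))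
          / (1 - Complex.normSq (y p)) ^ 2)) := by
  have hY : HasFDerivAt y (((1 : ℂ →L[ℂ] ℂ).smulRight (deriv y p)).restrictScalars ℝ) p :=
    (hyd.hasDerivAt.hasFDerivAt).restrictScalars ℝ
  set Y := ((1 : ℂ →L[ℂ] ℂ).smulRight (deriv y p)).restrictScalars ℝ with hYdef
  have hre : HasFDerivAt (fun z => (y z).re) (Complex.reCLM.comp Y) p :=
    Complex.reCLM.hasFDerivAt.comp p hY
  have him : HasFDerivAt (fun z => (y z).im) (Complex.imCLM.comp Y) p :=
    Complex.imCLM.hasFDerivAt.comp p hY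
  set N := (((y p).re • (Complex.reCLM.comp Y) + (y p).re • (Complex.reCLM.comp Y)) +
       ((y p).im • (Complex.imCLM.comp Y) + (y p).im • (Complex.imCLM.comp Y))) with hN
  have hns : HasFDerivAt (fun z => Complex.normSq (y z)) N p := by
    have := (hre.mul hre).add (him.mul him)
    simpa [Complex.normSq_apply, Pi.mul_def, Pi.add_def] using this
  have hden : HasFDerivAt (fun z => 1 - Complex.normSq (y z)) (-N) p := hns.const_sub 1
  have hinv : HasFDerivAt (fun z => (1 - Complex.normSq (y z))⁻¹)
      ((-((1 - Complex.normSq (y p)) ^ 2)⁻¹) • (-N)) p :=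
    (hasDerivAt_inv hd).comp_hasFDerivAt p hden
  have hA : HasFDerivAt (fun z => 2 * (y z).re * (1 - Complex.normSq (y z))⁻¹)
      ((2 * (y p).re) • ((-((1 - Complex.normSq (y p)) ^ 2)⁻¹) • (-N)) +
        (1 - Complex.normSq (y p))⁻¹ • ((2:ℝ) • (Complex.reCLM.comp Y))) p :=
    (hre.const_mul 2).mul hinv
  have hB : HasFDerivAt (fun z => 2 * (y z).im * (1 - Complex.normSq (y z))⁻¹)
      ((2 * (y p).im) • ((-((1 - Complex.normSq (y p)) ^ 2)⁻¹) • (-N)) +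
        (1 - Complex.normSq (y p))⁻¹ • ((2:ℝ) • (Complex.imCLM.comp Y))) p :=
    (him.const_mul 2).mul hinv
  have hC : HasFDerivAt (fun z => (1 + Complex.normSq (y z)) * (1 - Complex.normSq (y z))⁻¹)
      ((1 + Complex.normSq (y p)) • ((-((1 - Complex.normSq (y p)) ^ 2)⁻¹) • (-N)) +
        (1 - Complex.normSq (y p))⁻¹ • N) p :=
    (hns.const_add 1).mul hinv
  have hxe : x = fun z => (2 * (y z).re * (1 - Complex.normSq (y z))⁻¹,
      2 * (y z).im * (1 - Complex.normSq (y z))⁻¹,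
      (1 + Complex.normSq (y z)) * (1 - Complex.normSq (y z))⁻¹) :=
    funext fun z => by rw [hx z]; simp [div_eq_mul_inv]
  have hxd := (hA.prodMk (hB.prodMk hC))
  rw [← hxe] at hxd
  rw [hxd.fderiv]
  simp only [ContinuousLinearMap.prod_apply, ContinuousLinearMap.add_apply,
    ContinuousLinearMap.smul_apply, ContinuousLinearMap.coe_comp',
    Function.comp_apply, ContinuousLinearMap.coe_restrictScalars', hYdef,
    ContinuousLinearMap.smulRight_apply, ContinuousLinearMap.one_apply, hN,
    Complex.reCLM_apply, Complex.imCLM_apply, smul_eq_mul, Prod.mk.injEq,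
    ContinuousLinearMap.neg_apply]
  refine ⟨by field_simp; ring, by field_simp; ring, by field_simp; ring⟩

/-- **Section 4, following (kobayashi).** For the inverse stereographic projection `x` onto
the standard 2-sheeted hyperboloid of a holomorphic `y` with nonvanishing derivative and
`|y| ≠ 1`, Kobayashi's Weierstrass integrand is exactly the Christoffel dual differential:
`(1/(2y′))(1+y², i(1−y²), 2y) = x_z̄ / B_{M,ℂ}(x_z, x_z̄)`. -/
theorem kobayashi_is_christoffel
    (U : Set ℂ) (hUopen : IsOpen U)
    (y : ℂ → ℂ) (hy : DifferentiableOn ℂ y U) (hy' : ∀ z ∈ U, deriv y z ≠ 0)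
    (hy1 : ∀ z ∈ U, ‖y z‖ ≠ 1)
    (x : ℂ → ℝ × ℝ × ℝ)
    (hx : ∀ z, x z =
      (2 * (y z).re / (1 - Complex.normSq (y z)),
       2 * (y z).im / (1 - Complex.normSq (y z)),
       (1 + Complex.normSq (y z)) / (1 - Complex.normSq (y z)))) :
    ∀ p ∈ U,
      BMc (pdz x p) (pdzbar x p) ≠ 0 ∧
      (2 * deriv y p)⁻¹ •
          ((1 + y p ^ 2, Complex.I * (1 - y p ^ 2), 2 * y p) : ℂ × ℂ × ℂ) =
        (BMc (pdz x p) (pdzbar x p))⁻¹ • pdzbar x p := by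
  intro p hp
  have hyd : DifferentiableAt ℂ y p := hy.differentiableAt (hUopen.mem_nhds hp)
  have hdne : 1 - Complex.normSq (y p) ≠ 0 := by
    intro h
    have h1 : Complex.normSq (y p) = 1 := by linarith
    have : ‖y p‖ = 1 := by
      have := Complex.sq_norm (y p)
      nlinarith [norm_nonneg (y p)]
    exact hy1 p hp this
  have hc : (deriv y p).re ^ 2 + (deriv y p).im ^ 2 ≠ 0 := by
    have := Complex.normSq_pos.mpr (hy' p hp)
    rw [Complex.normSq_apply] at this
    nlinarith
  have h1 := fderiv_eval y p hyd hdne x hx 1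
  have hI := fderiv_eval y p hyd hdne x hx Complex.I
  simp only [one_mul, Complex.mul_re, Complex.mul_im, Complex.I_re, Complex.I_im,
    zero_mul, one_mul, zero_sub, zero_add, neg_mul, mul_neg] at h1 hI
  set a := (y p).re with ha
  set b := (y p).im with hb
  set cr := (deriv y p).re with hcr
  set ci := (deriv y p).im with hci
  have hns : Complex.normSq (y p) = a * a + b * b := Complex.normSq_apply (y p)
  rw [hns] at h1 hI hdne
  obtain ⟨d, hdd⟩ : ∃ d : ℝ, d = 1 - (a * a + b * b) := ⟨_, rfl⟩
  rw [← hdd] at h1 hI hdne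
  have hdC : (d : ℂ) ≠ 0 := Complex.ofReal_ne_zero.mpr hdne
  have hB : BMc (pdz x p) (pdzbar x p) = (((2 * (cr ^ 2 + ci ^ 2) / d ^ 2 : ℝ)) : ℂ) := by
    simp only [BMc, pdz, pdzbar, pdu, pdv, h1, hI, toC, Complex.ofReal_div,
      Complex.ofReal_add, Complex.ofReal_sub, Complex.ofReal_mul, Complex.ofReal_neg,
      Complex.ofReal_pow, Complex.ofReal_one, Complex.ofReal_ofNat, smul_eq_mul,
      Prod.fst, Prod.snd]
    simp only [Prod.smul_mk, Prod.mk_sub_mk, Prod.mk_add_mk, smul_eq_mul]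
    rw [Complex.ext_iff]
    constructor
    · simp [Complex.mul_re, Complex.mul_im, Complex.div_re, Complex.div_im, Complex.normSq_apply, ← Complex.ofReal_pow]
      field_simp
      rw [hdd]; ring
    · simp [Complex.mul_re, Complex.mul_im, Complex.div_re, Complex.div_im, Complex.normSq_apply, ← Complex.ofReal_pow]
      field_simp
      ring
  have hBne : BMc (pdz x p) (pdzbar x p) ≠ 0 := by
    rw [hB]
    simp only [ne_eq, Complex.ofReal_eq_zero]
    positivity
  refine ⟨hBne, ?_⟩
  have hdy : deriv y p = (cr : ℂ) + ci * I := (Complex.re_add_im (deriv y p)).symm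
  have hyp2 : y p = (a : ℂ) + b * I := (Complex.re_add_im (y p)).symm
  have hcne : ((cr : ℂ) + ci * I) ≠ 0 := by rw [← hdy]; exact hy' p hp
  have hc2 : ((cr : ℂ) ^ 2 + (ci : ℂ) ^ 2) ≠ 0 := by
    intro h
    apply hc
    exact_mod_cast h
  rw [Prod.ext_iff, Prod.ext_iff]
  refine ⟨?_, ?_, ?_⟩ <;>
  · simp only [Prod.smul_fst, Prod.smul_snd, smul_eq_mul, hB]
    simp only [pdzbar, pdu, pdv, h1, hI, toC, Complex.ofReal_div,
      Complex.ofReal_add, Complex.ofReal_sub, Complex.ofReal_mul, Complex.ofReal_neg,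
      Complex.ofReal_pow, Complex.ofReal_one, Complex.ofReal_ofNat,
      Prod.fst, Prod.snd, hdy, hyp2, Prod.smul_mk, Prod.mk_add_mk, smul_eq_mul]
    field_simp [hdC, hcne, hc2]
    rw [Complex.ext_iff]
    constructor <;>
      · simp [pow_two, Complex.mul_re, Complex.mul_im]
        push_cast
        subst hdd
        ring
end
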